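/- Let T be a theory in the language of second-order arithmetic. If T has a β-model, then T has a β-model containing no countable coded β-model of T. -/

import Mathlib

namespace Paper

/-! ### Syntax and semantics of second-order arithmetic (L₂) -/

/-- Number terms of L₂. -/
inductive Term where
  | var : ℕ → Term
  | zero : Term
  | one : Term
  | add : Term → Term → Term
  | mul : Term → Term → Term

/-- Formulas of L₂.  Number variables and set variables are indexed by naturals;
`mem t i` means `t ∈ X_i`. -/
inductive Formula where
  | eq : Term → Term → Formula
  | lt : Term → Term → Formula
  | mem : Term → ℕ → Formula
  | not : Formula → Formula
  | and : Formula → Formula → Formula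
  | or : Formula → Formula → Formula
  | nall : ℕ → Formula → Formula
  | nex : ℕ → Formula → Formula
  | sall : ℕ → Formula → Formula
  | sex : ℕ → Formula → Formula

def Term.val (e : ℕ → ℕ) : Term → ℕ
  | .var i => e i
  | .zero => 0
  | .one => 1
  | .add s t => s.val e + t.val e
  | .mul s t => s.val e * t.val e

/-- Satisfaction in the full standard model: set quantifiers range over all subsets of ℕ. -/
def Formula.Sat (e : ℕ → ℕ) (E : ℕ → Set ℕ) : Formula → Prop
  | .eq s t => s.val e = t.val e
  | .lt s t => s.val e < t.val e
  | .mem t i => t.val e ∈ E i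
  | .not φ => ¬ φ.Sat e E
  | .and φ ψ => φ.Sat e E ∧ ψ.Sat e E
  | .or φ ψ => φ.Sat e E ∨ ψ.Sat e E
  | .nall i φ => ∀ n : ℕ, φ.Sat (Function.update e i n) E
  | .nex i φ => ∃ n : ℕ, φ.Sat (Function.update e i n) E
  | .sall i φ => ∀ X : Set ℕ, φ.Sat e (Function.update E i X)
  | .sex i φ => ∃ X : Set ℕ, φ.Sat e (Function.update E i X)

/-- Satisfaction in an ω-model with second-order part `M`:
set quantifiers range over `M`. -/
def Formula.SatIn (M : Set (Set ℕ)) (e : ℕ → ℕ) (E : ℕ → Set ℕ) : Formula → Prop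
  | .eq s t => s.val e = t.val e
  | .lt s t => s.val e < t.val e
  | .mem t i => t.val e ∈ E i
  | .not φ => ¬ φ.SatIn M e E
  | .and φ ψ => φ.SatIn M e E ∧ ψ.SatIn M e E
  | .or φ ψ => φ.SatIn M e E ∨ ψ.SatIn M e E
  | .nall i φ => ∀ n : ℕ, φ.SatIn M (Function.update e i n) E
  | .nex i φ => ∃ n : ℕ, φ.SatIn M (Function.update e i n) E
  | .sall i φ => ∀ X ∈ M, φ.SatIn M e (Function.update E i X)
  | .sex i φ => ∃ X ∈ M, φ.SatIn M e (Function.update E i X)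

/-- A formula is arithmetic if it has no set quantifiers. -/
def Formula.Arithmetic : Formula → Prop
  | .eq _ _ => True
  | .lt _ _ => True
  | .mem _ _ => True
  | .not φ => φ.Arithmetic
  | .and φ ψ => φ.Arithmetic ∧ ψ.Arithmetic
  | .or φ ψ => φ.Arithmetic ∧ ψ.Arithmetic
  | .nall _ φ => φ.Arithmetic
  | .nex _ φ => φ.Arithmetic
  | .sall _ _ => False
  | .sex _ _ => False

mutual
  /-- Σ¹ₙ formulas (in prenex normal form). -/
  inductive Formula.IsSigma : ℕ → Formula → Prop where
    | arith {n : ℕ} {φ : Formula} : φ.Arithmetic → Formula.IsSigma n φ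
    | ofPi {n : ℕ} {φ : Formula} : Formula.IsPi n φ → Formula.IsSigma (n+1) φ
    | sex {n i : ℕ} {φ : Formula} :
        Formula.IsSigma (n+1) φ → Formula.IsSigma (n+1) (.sex i φ)
  /-- Π¹ₙ formulas (in prenex normal form). -/
  inductive Formula.IsPi : ℕ → Formula → Prop where
    | arith {n : ℕ} {φ : Formula} : φ.Arithmetic → Formula.IsPi n φ
    | ofSigma {n : ℕ} {φ : Formula} : Formula.IsSigma n φ → Formula.IsPi (n+1) φ
    | sall {n i : ℕ} {φ : Formula} :
        Formula.IsPi (n+1) φ → Formula.IsPi (n+1) (.sall i φ)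
end

/-- Quantifier-free formulas. -/
def Formula.QFree : Formula → Prop
  | .eq _ _ => True
  | .lt _ _ => True
  | .mem _ _ => True
  | .not φ => φ.QFree
  | .and φ ψ => φ.QFree ∧ ψ.QFree
  | .or φ ψ => φ.QFree ∧ ψ.QFree
  | .nall _ _ => False
  | .nex _ _ => False
  | .sall _ _ => False
  | .sex _ _ => False

/-- Existential (Σ⁰₁-defining) formulas: number-existential quantifiers over a
quantifier-free matrix.  (By the relativized Matiyasevich theorem these define
exactly the sets r.e. in the set parameters.) -/
inductive Formula.Existential : Formula → Prop where
  | qf {φ : Formula} : φ.QFree → Formula.Existential φ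
  | nex {i : ℕ} {φ : Formula} : Formula.Existential φ → Formula.Existential (.nex i φ)

/-- Gödel codes of terms. -/
def Term.code : Term → ℕ
  | .var i => Nat.pair 0 i
  | .zero => Nat.pair 1 0
  | .one => Nat.pair 2 0
  | .add s t => Nat.pair 3 (Nat.pair s.code t.code)
  | .mul s t => Nat.pair 4 (Nat.pair s.code t.code)

/-- Gödel codes of formulas. -/
def Formula.code : Formula → ℕ
  | .eq s t => Nat.pair 0 (Nat.pair s.code t.code)
  | .lt s t => Nat.pair 1 (Nat.pair s.code t.code)
  | .mem t i => Nat.pair 2 (Nat.pair t.code i)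
  | .not φ => Nat.pair 3 φ.code
  | .and φ ψ => Nat.pair 4 (Nat.pair φ.code ψ.code)
  | .or φ ψ => Nat.pair 5 (Nat.pair φ.code ψ.code)
  | .nall i φ => Nat.pair 6 (Nat.pair i φ.code)
  | .nex i φ => Nat.pair 7 (Nat.pair i φ.code)
  | .sall i φ => Nat.pair 8 (Nat.pair i φ.code)
  | .sex i φ => Nat.pair 9 (Nat.pair i φ.code)

/-! ### Reducibilities and jumps -/

/-- `B` is r.e. in `A`: definable by an existential formula with parameter `A`
(the free number variables are all evaluated at the input `n`,
the set variables at `A`). -/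
def REIn (B A : Set ℕ) : Prop :=
  ∃ φ : Formula, φ.Existential ∧ ∀ n : ℕ, n ∈ B ↔ φ.Sat (fun _ => n) (fun _ => A)

/-- Turing reducibility: `B` is Δ⁰₁ in `A`. -/
def TuringLE (B A : Set ℕ) : Prop := REIn B A ∧ REIn Bᶜ A

/-- The Turing jump of `A`: the set of codes of true existential sentences with
parameter `A` (a complete Σ⁰₁(A) set). -/
def turingJump (A : Set ℕ) : Set ℕ :=
  {n | ∃ φ : Formula, φ.code = n ∧ φ.Existential ∧ φ.Sat (fun _ => 0) (fun _ => A)}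

/-- Hyperarithmetic reducibility: `B` is Δ¹₁ definable with parameter `A`. -/
def HypLE (B A : Set ℕ) : Prop :=
  ∃ φ ψ : Formula, φ.IsSigma 1 ∧ ψ.IsPi 1 ∧
    ∀ n : ℕ, (n ∈ B ↔ φ.Sat (fun _ => n) (fun _ => A)) ∧
      (n ∈ B ↔ ψ.Sat (fun _ => n) (fun _ => A))

/-- The hyperjump `𝒪^A` of `A`: the set of codes of true Π¹₁ sentences with
parameter `A` (a complete Π¹₁(A) set). -/
def hyperjump (A : Set ℕ) : Set ℕ :=
  {n | ∃ φ : Formula, φ.code = n ∧ φ.IsPi 1 ∧ φ.Sat (fun _ => 0) (fun _ => A)}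

/-! ### β-models and coded models -/

/-- A βₙ-model: a (nonempty) ω-model correct for Σ¹ₙ formulas with parameters
from the model. -/
def IsBetaNModel (n : ℕ) (M : Set (Set ℕ)) : Prop :=
  M.Nonempty ∧ ∀ φ : Formula, φ.IsSigma n →
    ∀ (e : ℕ → ℕ) (E : ℕ → Set ℕ), (∀ i, E i ∈ M) → (φ.SatIn M e E ↔ φ.Sat e E)

/-- A β-model is a β₁-model. -/
def IsBetaModel (M : Set (Set ℕ)) : Prop := IsBetaNModel 1 M

/-- The `i`-th slice of a real `C` coding a countable family of reals. -/
def slice (C : Set ℕ) (i : ℕ) : Set ℕ := {m | Nat.pair i m ∈ C}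

/-- The countable family of reals coded by `C`. -/
def codedFamily (C : Set ℕ) : Set (Set ℕ) := Set.range (slice C)

/-- `C` is a countable coded β-model. -/
def IsCodedBetaModel (C : Set ℕ) : Prop := IsBetaModel (codedFamily C)

/-- `C` is a countable coded βₙ-model. -/
def IsCodedBetaNModel (n : ℕ) (C : Set ℕ) : Prop := IsBetaNModel n (codedFamily C)

/-- An ω-model `M` satisfies the L₂-theory `T` (open axioms are satisfied under
all assignments with set parameters from `M`). -/
def SatisfiesTheory (M : Set (Set ℕ)) (T : Set Formula) : Prop :=
  ∀ φ ∈ T, ∀ (e : ℕ → ℕ) (E : ℕ → Set ℕ), (∀ i, E i ∈ M) → φ.SatIn M e E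



/-! ### Auxiliary development for `minimal_beta_model` -/

open Classical

/-- The binary relation coded by a real. -/
def rel (X : Set ℕ) (a b : ℕ) : Prop := Nat.pair a b ∈ X

/-- Absoluteness of arithmetic formulas between an ω-model and the full model. -/
theorem arith_abs : ∀ (φ : Formula), φ.Arithmetic →
    ∀ (M : Set (Set ℕ)) (e : ℕ → ℕ) (E : ℕ → Set ℕ), (φ.SatIn M e E ↔ φ.Sat e E) := by
  intro φ
  induction φ with
  | eq s t => intros; exact Iff.rfl
  | lt s t => intros; exact Iff.rfl
  | mem t i => intros; exact Iff.rfl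
  | not φ ih => intro h M e E; exact not_congr (ih h M e E)
  | and φ ψ ih₁ ih₂ => intro h M e E; exact and_congr (ih₁ h.1 M e E) (ih₂ h.2 M e E)
  | or φ ψ ih₁ ih₂ => intro h M e E; exact or_congr (ih₁ h.1 M e E) (ih₂ h.2 M e E)
  | nall i φ ih => intro h M e E; exact forall_congr' fun n => ih h M _ E
  | nex i φ ih => intro h M e E; exact exists_congr fun n => ih h M _ E
  | sall i φ ih => intro h; exact h.elim
  | sex i φ ih => intro h; exact h.elim

/-- Shift of term variables `k ↦ 3k`. -/
def tsh : Term → Term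
  | .var k => .var (3*k)
  | .zero => .zero
  | .one => .one
  | .add s t => .add (tsh s) (tsh t)
  | .mul s t => .mul (tsh s) (tsh t)

theorem tsh_val (t : Term) {e e' : ℕ → ℕ} (h : ∀ k, e' (3*k) = e k) :
    (tsh t).val e' = t.val e := by
  induction t with
  | var k => exact h k
  | zero => rfl
  | one => rfl
  | add s t ihs iht => simp [tsh, Term.val, ihs, iht]
  | mul s t ihs iht => simp [tsh, Term.val, ihs, iht]

/-- A quantifier-free formula expressing `p = Nat.pair s t`. -/
def pairf (s t p : Term) : Formula :=
  .or (.and (.lt s t) (.eq p (.add (.mul t t) s)))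
      (.and (.not (.lt s t)) (.eq p (.add (.add (.mul s s) s) t)))

theorem pairf_sat (s t p : Term) (e : ℕ → ℕ) (E : ℕ → Set ℕ) :
    (pairf s t p).Sat e E ↔ p.val e = Nat.pair (s.val e) (t.val e) := by
  by_cases h : s.val e < t.val e <;>
    simp [pairf, Formula.Sat, Term.val, Nat.pair, h]

theorem pairf_arith (s t p : Term) : (pairf s t p).Arithmetic := by
  simp [pairf, Formula.Arithmetic]



/-- Translation of a formula into an arithmetic formula over the code `D`:
number variables go to slots `3k`, set variables become number variables
(slice indices) in slots `3j+1`, and slots `3j+2` are scratch. -/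
def trans : Formula → Formula
  | .eq s t => .eq (tsh s) (tsh t)
  | .lt s t => .lt (tsh s) (tsh t)
  | .mem t j => .nex (3*j+2) (.and (pairf (.var (3*j+1)) (tsh t) (.var (3*j+2)))
      (.mem (.var (3*j+2)) 0))
  | .not φ => .not (trans φ)
  | .and φ ψ => .and (trans φ) (trans ψ)
  | .or φ ψ => .or (trans φ) (trans ψ)
  | .nall i φ => .nall (3*i) (trans φ)
  | .nex i φ => .nex (3*i) (trans φ)
  | .sall j φ => .nall (3*j+1) (trans φ)
  | .sex j φ => .nex (3*j+1) (trans φ)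

theorem trans_arith (φ : Formula) : (trans φ).Arithmetic := by
  induction φ <;> simp [trans, Formula.Arithmetic, pairf, *]

theorem updE (D : Set ℕ) (f : ℕ → ℕ) (j m : ℕ) :
    Function.update (fun j' => slice D (f j')) j (slice D m)
      = fun j' => slice D (Function.update f j m j') := by
  funext j'
  rcases eq_or_ne j' j with h | h
  · subst h
    rw [Function.update_self, Function.update_self]
  · rw [Function.update_of_ne h, Function.update_of_ne h]

theorem trans_sat (φ : Formula) (D : Set ℕ) :
    ∀ (e f e' : ℕ → ℕ) (E' : ℕ → Set ℕ),
      (∀ k, e' (3*k) = e k) → (∀ j, e' (3*j+1) = f j) → E' 0 = D →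
      ((trans φ).Sat e' E' ↔ φ.SatIn (codedFamily D) e (fun j => slice D (f j))) := by
  induction φ with
  | eq s t =>
    intro e f e' E' h1 h2 h3
    show (tsh s).val e' = (tsh t).val e' ↔ s.val e = t.val e
    rw [tsh_val s h1, tsh_val t h1]
  | lt s t =>
    intro e f e' E' h1 h2 h3
    show (tsh s).val e' < (tsh t).val e' ↔ s.val e < t.val e
    rw [tsh_val s h1, tsh_val t h1]
  | mem t j =>
    intro e f e' E' h1 h2 h3
    show (∃ p, (pairf (.var (3*j+1)) (tsh t) (.var (3*j+2))).Sat
        (Function.update e' (3*j+2) p) E' ∧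
        (Function.update e' (3*j+2) p) (3*j+2) ∈ E' 0) ↔ t.val e ∈ slice D (f j)
    have hval : ∀ p, (tsh t).val (Function.update e' (3*j+2) p) = t.val e := by
      intro p
      refine tsh_val t (fun k => ?_)
      rw [Function.update_of_ne (by omega), h1]
    constructor
    · rintro ⟨p, hp, hmem⟩
      rw [pairf_sat] at hp
      simp only [Term.val, Function.update_self,
        Function.update_of_ne (show 3*j+1 ≠ 3*j+2 by omega), hval, h2] at hp
      rw [h3] at hmem
      simp only [Function.update_self] at hmem
      rw [hp] at hmem
      exact hmem
    · intro hmem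
      refine ⟨Nat.pair (f j) (t.val e), ?_, ?_⟩
      · rw [pairf_sat]
        simp only [Term.val, Function.update_self,
          Function.update_of_ne (show 3*j+1 ≠ 3*j+2 by omega), hval, h2]
      · rw [h3]
        simp only [Function.update_self]
        exact hmem
  | not φ ih =>
    intro e f e' E' h1 h2 h3
    exact not_congr (ih e f e' E' h1 h2 h3)
  | and φ ψ ih₁ ih₂ =>
    intro e f e' E' h1 h2 h3
    exact and_congr (ih₁ e f e' E' h1 h2 h3) (ih₂ e f e' E' h1 h2 h3)
  | or φ ψ ih₁ ih₂ =>
    intro e f e' E' h1 h2 h3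
    exact or_congr (ih₁ e f e' E' h1 h2 h3) (ih₂ e f e' E' h1 h2 h3)
  | nall i φ ih =>
    intro e f e' E' h1 h2 h3
    show (∀ m, (trans φ).Sat (Function.update e' (3*i) m) E')
        ↔ (∀ m, φ.SatIn (codedFamily D) (Function.update e i m) (fun j => slice D (f j)))
    refine forall_congr' fun m => ih _ f _ E' ?_ ?_ h3
    · intro k
      by_cases hk : k = i
      · subst hk; simp
      · rw [Function.update_of_ne (by omega), Function.update_of_ne hk, h1]
    · intro j
      rw [Function.update_of_ne (by omega), h2]
  | nex i φ ih =>
    intro e f e' E' h1 h2 h3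
    show (∃ m, (trans φ).Sat (Function.update e' (3*i) m) E')
        ↔ (∃ m, φ.SatIn (codedFamily D) (Function.update e i m) (fun j => slice D (f j)))
    refine exists_congr fun m => ih _ f _ E' ?_ ?_ h3
    · intro k
      by_cases hk : k = i
      · subst hk; simp
      · rw [Function.update_of_ne (by omega), Function.update_of_ne hk, h1]
    · intro j
      rw [Function.update_of_ne (by omega), h2]
  | sall j φ ih =>
    intro e f e' E' h1 h2 h3
    have cond : ∀ m : ℕ,
        ((trans φ).Sat (Function.update e' (3*j+1) m) E' ↔
          φ.SatIn (codedFamily D) e (fun j' => slice D (Function.update f j m j'))) := by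
      intro m
      refine ih e (Function.update f j m) _ E' ?_ ?_ h3
      · intro k; rw [Function.update_of_ne (by omega), h1]
      · intro j'
        by_cases hj : j' = j
        · subst hj; simp
        · rw [Function.update_of_ne (by omega : 3*j'+1 ≠ 3*j+1),
            Function.update_of_ne hj, h2]
    show (∀ m, (trans φ).Sat (Function.update e' (3*j+1) m) E')
        ↔ (∀ X ∈ codedFamily D, φ.SatIn (codedFamily D) e
            (Function.update (fun j' => slice D (f j')) j X))
    constructor
    · rintro hL X ⟨m, rfl⟩
      rw [updE]
      exact (cond m).mp (hL m)
    · intro hR m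
      have := hR (slice D m) ⟨m, rfl⟩
      rw [updE] at this
      exact (cond m).mpr this
  | sex j φ ih =>
    intro e f e' E' h1 h2 h3
    have cond : ∀ m : ℕ,
        ((trans φ).Sat (Function.update e' (3*j+1) m) E' ↔
          φ.SatIn (codedFamily D) e (fun j' => slice D (Function.update f j m j'))) := by
      intro m
      refine ih e (Function.update f j m) _ E' ?_ ?_ h3
      · intro k; rw [Function.update_of_ne (by omega), h1]
      · intro j'
        by_cases hj : j' = j
        · subst hj; simp
        · rw [Function.update_of_ne (by omega : 3*j'+1 ≠ 3*j+1),
            Function.update_of_ne hj, h2]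
    show (∃ m, (trans φ).Sat (Function.update e' (3*j+1) m) E')
        ↔ (∃ X ∈ codedFamily D, φ.SatIn (codedFamily D) e
            (Function.update (fun j' => slice D (f j')) j X))
    constructor
    · rintro ⟨m, hm⟩
      refine ⟨slice D m, ⟨m, rfl⟩, ?_⟩
      rw [updE]
      exact (cond m).mp hm
    · rintro ⟨X, ⟨m, rfl⟩, hX⟩
      rw [updE] at hX
      exact ⟨m, (cond m).mpr hX⟩

/-- Matrix of the well-foundedness formula: "if X (set var 0) is nonempty then
it has a `rel`-minimal element w.r.t. the relation coded by set var 1". -/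
def inrel : Formula := .nex 2 (.and (pairf (.var 1) (.var 0) (.var 2)) (.mem (.var 2) 1))

def muwf : Formula :=
  .or (.not (.nex 0 (.mem (.var 0) 0)))
      (.nex 0 (.and (.mem (.var 0) 0)
        (.nall 1 (.or (.not (.mem (.var 1) 0)) (.not inrel)))))

/-- The Π¹₁ formula "the relation coded by set var 1 is well-founded". -/
def piwf : Formula := .sall 0 muwf

theorem muwf_arith : muwf.Arithmetic := by
  simp [muwf, inrel, pairf, Formula.Arithmetic]

theorem muwf_sat (e : ℕ → ℕ) (E : ℕ → Set ℕ) :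
    muwf.Sat e E ↔ ((E 0).Nonempty → ∃ n ∈ E 0, ∀ m ∈ E 0, ¬ rel (E 1) m n) := by
  have hin : ∀ (e' : ℕ → ℕ), inrel.Sat e' E ↔ rel (E 1) (e' 1) (e' 0) := by
    intro e'
    show (∃ p, (pairf (.var 1) (.var 0) (.var 2)).Sat (Function.update e' 2 p) E ∧
      (Function.update e' 2 p) 2 ∈ E 1) ↔ _
    constructor
    · rintro ⟨p, hp, hm⟩
      rw [pairf_sat] at hp
      simp only [Term.val, Function.update_self,
        Function.update_of_ne (show (1:ℕ) ≠ 2 by omega),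
        Function.update_of_ne (show (0:ℕ) ≠ 2 by omega)] at hp hm
      rw [hp] at hm; exact hm
    · intro hm
      refine ⟨Nat.pair (e' 1) (e' 0), ?_, ?_⟩
      · rw [pairf_sat]
        simp only [Term.val, Function.update_self,
          Function.update_of_ne (show (1:ℕ) ≠ 2 by omega),
          Function.update_of_ne (show (0:ℕ) ≠ 2 by omega)]
      · simpa only [Function.update_self, rel] using hm
  show (¬ ∃ n, (Function.update e 0 n) 0 ∈ E 0) ∨
      (∃ n, (Function.update e 0 n) 0 ∈ E 0 ∧ ∀ m,
        (¬ (Function.update (Function.update e 0 n) 1 m) 1 ∈ E 0) ∨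
        ¬ inrel.Sat (Function.update (Function.update e 0 n) 1 m) E) ↔ _
  simp only [hin, Function.update_self,
    Function.update_of_ne (show (0:ℕ) ≠ 1 by omega)]
  constructor
  · rintro (hempty | ⟨n, hn, hmin⟩)
    · intro ⟨n, hn⟩; exact absurd ⟨n, hn⟩ hempty
    · intro _
      exact ⟨n, hn, fun m hm => ((hmin m).resolve_left (not_not_intro hm))⟩
  · intro h
    by_cases hne : (E 0).Nonempty
    · obtain ⟨n, hn, hmin⟩ := h hne
      exact Or.inr ⟨n, hn, fun m => by
        by_cases hm : m ∈ E 0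
        · exact Or.inr (hmin m hm)
        · exact Or.inl hm⟩
    · exact Or.inl (fun ⟨n, hn⟩ => hne ⟨n, hn⟩)

theorem piwf_sat (e : ℕ → ℕ) (E : ℕ → Set ℕ) :
    piwf.Sat e E ↔ WellFounded (rel (E 1)) := by
  rw [WellFounded.wellFounded_iff_has_min]
  show (∀ X : Set ℕ, muwf.Sat e (Function.update E 0 X)) ↔ _
  refine forall_congr' fun X => ?_
  rw [muwf_sat]
  simp only [Function.update_self, Function.update_of_ne (show (1:ℕ) ≠ 0 by omega)]

theorem piwf_satIn (M : Set (Set ℕ)) (e : ℕ → ℕ) (E : ℕ → Set ℕ) :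
    piwf.SatIn M e E ↔
      ∀ X ∈ M, (X.Nonempty → ∃ n ∈ X, ∀ m ∈ X, ¬ rel (E 1) m n) := by
  show (∀ X ∈ M, muwf.SatIn M e (Function.update E 0 X)) ↔ _
  refine forall_congr' fun X => forall_congr' fun _ => ?_
  rw [arith_abs muwf muwf_arith, muwf_sat]
  simp only [Function.update_self, Function.update_of_ne (show (1:ℕ) ≠ 0 by omega)]

theorem piwf_satIn_iff_wf {M : Set (Set ℕ)} (hβ : IsBetaModel M)
    (e : ℕ → ℕ) (E : ℕ → Set ℕ) (hE : ∀ i, E i ∈ M) :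
    (piwf.SatIn M e E ↔ WellFounded (rel (E 1))) := by
  have hσ : Formula.IsSigma 1 (.sex 0 (.not muwf)) :=
    Formula.IsSigma.sex (Formula.IsSigma.arith muwf_arith)
  have habs := hβ.2 _ hσ e E hE
  have h1 : piwf.SatIn M e E ↔ ¬ (Formula.SatIn M e E (.sex 0 (.not muwf))) := by
    show (∀ X ∈ M, muwf.SatIn M e (Function.update E 0 X)) ↔
      ¬ ∃ X ∈ M, ¬ muwf.SatIn M e (Function.update E 0 X)
    constructor
    · rintro h ⟨X, hX, hn⟩; exact hn (h X hX)
    · intro h X hX; by_contra hn; exact h ⟨X, hX, hn⟩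
  have h2 : piwf.Sat e E ↔ ¬ (Formula.Sat e E (.sex 0 (.not muwf))) := by
    show (∀ X : Set ℕ, muwf.Sat e (Function.update E 0 X)) ↔
      ¬ ∃ X : Set ℕ, ¬ muwf.Sat e (Function.update E 0 X)
    constructor
    · rintro h ⟨X, hn⟩; exact hn (h X)
    · intro h X; by_contra hn; exact h ⟨X, hn⟩
  rw [h1, habs, ← h2, piwf_sat]

theorem transpi_sat {D : Set ℕ} (hDβ : IsBetaModel (codedFamily D))
    (e' : ℕ → ℕ) (E' : ℕ → Set ℕ) (hE : E' 0 = D) :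
    ((trans piwf).Sat e' E' ↔ WellFounded (rel (slice D (e' 4)))) := by
  rw [trans_sat piwf D (fun k => e' (3*k)) (fun j => e' (3*j+1)) e' E'
      (fun k => rfl) (fun j => rfl) hE,
    piwf_satIn_iff_wf hDβ _ _ (fun i => ⟨e' (3*i+1), rfl⟩)]

/-- `pair (var 8) (var 9) ∈ slice (set var 0) (var 4)`, with scratch vars 10, 11. -/
def relmem : Formula :=
  .nex 10 (.and (pairf (.var 8) (.var 9) (.var 10))
    (.nex 11 (.and (pairf (.var 4) (.var 10) (.var 11)) (.mem (.var 11) 0))))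

/-- The arithmetic formula (with set parameter `D` at set var 0) defining the sum,
over all `j` with `slice D j` well-founded, of `slice D j` together with a point
on top of each summand. -/
def Psi : Formula :=
  .nex 6 (.nex 7 (.and (pairf (.var 6) (.var 7) (.var 0))
    (.nex 4 (.nex 8 (.and (.and (pairf (.var 4) (.add (.var 8) .one) (.var 6)) (trans piwf))
      (.or (pairf (.var 4) .zero (.var 7))
           (.nex 9 (.and (pairf (.var 4) (.add (.var 9) .one) (.var 7)) relmem))))))))

theorem Psi_arith : Psi.Arithmetic := by
  have := trans_arith piwf
  simp [Psi, relmem, pairf, Formula.Arithmetic, this]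

/-- The relation defined by `Psi` over `D`. -/
def Wrel (D : Set ℕ) (x y : ℕ) : Prop :=
  ∃ j a, x = Nat.pair j (a+1) ∧ WellFounded (rel (slice D j)) ∧
    (y = Nat.pair j 0 ∨ ∃ b, y = Nat.pair j (b+1) ∧ rel (slice D j) a b)


theorem sat_nex (i : ℕ) (φ : Formula) (e : ℕ → ℕ) (E : ℕ → Set ℕ) :
    (Formula.nex i φ).Sat e E ↔ ∃ n, φ.Sat (Function.update e i n) E := Iff.rfl
theorem sat_and (φ ψ : Formula) (e : ℕ → ℕ) (E : ℕ → Set ℕ) :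
    (Formula.and φ ψ).Sat e E ↔ φ.Sat e E ∧ ψ.Sat e E := Iff.rfl
theorem sat_or (φ ψ : Formula) (e : ℕ → ℕ) (E : ℕ → Set ℕ) :
    (Formula.or φ ψ).Sat e E ↔ φ.Sat e E ∨ ψ.Sat e E := Iff.rfl
theorem sat_mem (t : Term) (i : ℕ) (e : ℕ → ℕ) (E : ℕ → Set ℕ) :
    (Formula.mem t i).Sat e E ↔ t.val e ∈ E i := Iff.rfl

theorem Psi_sat {D : Set ℕ} (hDβ : IsBetaModel (codedFamily D))
    (e : ℕ → ℕ) (E : ℕ → Set ℕ) (hE : E 0 = D) :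
    (Psi.Sat e E ↔ ∃ x y, e 0 = Nat.pair x y ∧ Wrel D x y) := by
  simp only [Psi, relmem, sat_nex, sat_and, sat_or, sat_mem, pairf_sat, Term.val,
    transpi_sat hDβ, hE, Wrel, Function.update_self,
    Function.update_of_ne (show (0:ℕ) ≠ 4 by omega),
    Function.update_of_ne (show (0:ℕ) ≠ 6 by omega),
    Function.update_of_ne (show (0:ℕ) ≠ 7 by omega),
    Function.update_of_ne (show (0:ℕ) ≠ 8 by omega),
    Function.update_of_ne (show (0:ℕ) ≠ 9 by omega),
    Function.update_of_ne (show (0:ℕ) ≠ 10 by omega),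
    Function.update_of_ne (show (0:ℕ) ≠ 11 by omega),
    Function.update_of_ne (show (4:ℕ) ≠ 0 by omega),
    Function.update_of_ne (show (4:ℕ) ≠ 6 by omega),
    Function.update_of_ne (show (4:ℕ) ≠ 7 by omega),
    Function.update_of_ne (show (4:ℕ) ≠ 8 by omega),
    Function.update_of_ne (show (4:ℕ) ≠ 9 by omega),
    Function.update_of_ne (show (4:ℕ) ≠ 10 by omega),
    Function.update_of_ne (show (4:ℕ) ≠ 11 by omega),
    Function.update_of_ne (show (6:ℕ) ≠ 0 by omega),
    Function.update_of_ne (show (6:ℕ) ≠ 4 by omega),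
    Function.update_of_ne (show (6:ℕ) ≠ 7 by omega),
    Function.update_of_ne (show (6:ℕ) ≠ 8 by omega),
    Function.update_of_ne (show (6:ℕ) ≠ 9 by omega),
    Function.update_of_ne (show (6:ℕ) ≠ 10 by omega),
    Function.update_of_ne (show (6:ℕ) ≠ 11 by omega),
    Function.update_of_ne (show (7:ℕ) ≠ 0 by omega),
    Function.update_of_ne (show (7:ℕ) ≠ 4 by omega),
    Function.update_of_ne (show (7:ℕ) ≠ 6 by omega),
    Function.update_of_ne (show (7:ℕ) ≠ 8 by omega),
    Function.update_of_ne (show (7:ℕ) ≠ 9 by omega),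
    Function.update_of_ne (show (7:ℕ) ≠ 10 by omega),
    Function.update_of_ne (show (7:ℕ) ≠ 11 by omega),
    Function.update_of_ne (show (8:ℕ) ≠ 0 by omega),
    Function.update_of_ne (show (8:ℕ) ≠ 4 by omega),
    Function.update_of_ne (show (8:ℕ) ≠ 6 by omega),
    Function.update_of_ne (show (8:ℕ) ≠ 7 by omega),
    Function.update_of_ne (show (8:ℕ) ≠ 9 by omega),
    Function.update_of_ne (show (8:ℕ) ≠ 10 by omega),
    Function.update_of_ne (show (8:ℕ) ≠ 11 by omega),
    Function.update_of_ne (show (9:ℕ) ≠ 0 by omega),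
    Function.update_of_ne (show (9:ℕ) ≠ 4 by omega),
    Function.update_of_ne (show (9:ℕ) ≠ 6 by omega),
    Function.update_of_ne (show (9:ℕ) ≠ 7 by omega),
    Function.update_of_ne (show (9:ℕ) ≠ 8 by omega),
    Function.update_of_ne (show (9:ℕ) ≠ 10 by omega),
    Function.update_of_ne (show (9:ℕ) ≠ 11 by omega),
    Function.update_of_ne (show (10:ℕ) ≠ 0 by omega),
    Function.update_of_ne (show (10:ℕ) ≠ 4 by omega),
    Function.update_of_ne (show (10:ℕ) ≠ 6 by omega),
    Function.update_of_ne (show (10:ℕ) ≠ 7 by omega),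
    Function.update_of_ne (show (10:ℕ) ≠ 8 by omega),
    Function.update_of_ne (show (10:ℕ) ≠ 9 by omega),
    Function.update_of_ne (show (10:ℕ) ≠ 11 by omega),
    Function.update_of_ne (show (11:ℕ) ≠ 0 by omega),
    Function.update_of_ne (show (11:ℕ) ≠ 4 by omega),
    Function.update_of_ne (show (11:ℕ) ≠ 6 by omega),
    Function.update_of_ne (show (11:ℕ) ≠ 7 by omega),
    Function.update_of_ne (show (11:ℕ) ≠ 8 by omega),
    Function.update_of_ne (show (11:ℕ) ≠ 9 by omega),
    Function.update_of_ne (show (11:ℕ) ≠ 10 by omega)]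
  constructor
  · rintro ⟨x, y, h0, j, a, ⟨hx, hwf⟩, hrest⟩
    refine ⟨x, y, h0, j, a, hx, hwf, ?_⟩
    rcases hrest with h | ⟨b, hy, u, hu, w, hw, hmem⟩
    · exact Or.inl h
    · refine Or.inr ⟨b, hy, ?_⟩
      show Nat.pair j (Nat.pair a b) ∈ D
      rw [← hu, ← hw]; exact hmem
  · rintro ⟨x, y, h0, j, a, hx, hwf, hrest⟩
    refine ⟨x, y, h0, j, a, ⟨hx, hwf⟩, ?_⟩
    rcases hrest with h | ⟨b, hy, hr⟩
    · exact Or.inl h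
    · exact Or.inr ⟨b, hy, Nat.pair a b, rfl, Nat.pair j (Nat.pair a b), rfl, hr⟩

def fIff (a b : Formula) : Formula := .and (.or (.not a) b) (.or (.not b) a)

theorem fIff_sat (a b : Formula) (e : ℕ → ℕ) (E : ℕ → Set ℕ) :
    (fIff a b).Sat e E ↔ (a.Sat e E ↔ b.Sat e E) := by
  show ((¬ a.Sat e E) ∨ b.Sat e E) ∧ ((¬ b.Sat e E) ∨ a.Sat e E) ↔ _
  tauto

/-- A β-model contains every set defined by an arithmetic formula whose truth
value depends only on variable 0 and set parameter 0, with a parameter from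
the model. -/
theorem mem_of_arith_def {M : Set (Set ℕ)} (hβ : IsBetaModel M) {A : Set ℕ} (hA : A ∈ M)
    (ψ : Formula) (hψ : ψ.Arithmetic) (P : ℕ → Prop)
    (hdep : ∀ (e : ℕ → ℕ) (E : ℕ → Set ℕ), E 0 = A → (ψ.Sat e E ↔ P (e 0))) :
    {n | P n} ∈ M := by
  have hσ : Formula.IsSigma 1 (.sex 1 (.nall 0 (fIff (.mem (.var 0) 1) ψ))) := by
    refine Formula.IsSigma.sex (Formula.IsSigma.arith ?_)
    show (fIff (.mem (.var 0) 1) ψ).Arithmetic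
    simp [fIff, Formula.Arithmetic, hψ]
  have habs := hβ.2 _ hσ (fun _ => 0) (fun _ => A) (fun _ => hA)
  have key : ∀ (n : ℕ) (X : Set ℕ),
      (fIff (.mem (.var 0) 1) ψ).Sat (Function.update (fun _ => 0) 0 n)
        (Function.update (fun _ => A) 1 X) ↔ (n ∈ X ↔ P n) := by
    intro n X
    have hb : ψ.Sat (Function.update (fun _ => 0) 0 n)
        (Function.update (fun _ => A) 1 X) ↔ P n := by
      rw [hdep _ _ (by rw [Function.update_of_ne (show (0:ℕ) ≠ 1 by omega)]),
        Function.update_self]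
    rw [fIff_sat, sat_mem]
    simp only [Term.val, Function.update_self, hb]
  have hsat : Formula.Sat (fun _ => 0) (fun _ => A) (.sex 1 (.nall 0 (fIff (.mem (.var 0) 1) ψ))) := by
    refine ⟨{n | P n}, fun n => ?_⟩
    exact (key n {n | P n}).mpr Iff.rfl
  obtain ⟨X, hXM, hX⟩ := habs.mpr hsat
  have : X = {n | P n} := by
    ext n
    have h := hX n
    rw [arith_abs _ (by simp [fIff, Formula.Arithmetic, hψ] :
      (fIff (.mem (.var 0) 1) ψ).Arithmetic), key n X] at h
    exact h
  rwa [this] at hXM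

/-- Rank function of a well-founded relation on `ℕ`. -/
noncomputable def rk {r : ℕ → ℕ → Prop} (h : WellFounded r) (a : ℕ) : Ordinal :=
  (h.apply a).rank

theorem rk_lt {r : ℕ → ℕ → Prop} (h : WellFounded r) {a b : ℕ} (hab : r a b) :
    rk h a < rk h b := by
  have := Acc.rank_lt_of_rel (h.apply b) hab
  rwa [Subsingleton.elim ((h.apply b).inv hab) (h.apply a)] at this

theorem rk_eq {r : ℕ → ℕ → Prop} (h : WellFounded r) (a : ℕ) :
    rk h a = ⨆ b : {b // r b a}, Order.succ (rk h b) := by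
  have := Acc.rank_eq (h.apply a)
  rw [rk, this]
  rfl

theorem rk_le_of_hom {r s : ℕ → ℕ → Prop} (hr : WellFounded r) (hs : WellFounded s)
    (f : ℕ → ℕ) (hf : ∀ a b, r a b → s (f a) (f b)) : ∀ a, rk hr a ≤ rk hs (f a) := by
  intro a
  induction a using hr.induction with
  | _ a ih =>
    rw [rk_eq hr a]
    apply Ordinal.iSup_le
    rintro ⟨b, hb⟩
    exact Order.succ_le_of_lt ((ih b hb).trans_lt (rk_lt hs (hf b a hb)))

/-- The "height" of (the relation coded by) a real. -/
noncomputable def ht (X : Set ℕ) : Ordinal :=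
  if h : WellFounded (rel X) then Ordinal.lsub (fun n => rk h n) else 0

/-- The ordinal invariant of a coded model: the sup of the heights of the
well-founded relations among its members. -/
noncomputable def mu (C : Set ℕ) : Ordinal := Ordinal.lsub (fun i => ht (slice C i))

theorem wrel_acc {D : Set ℕ} {j : ℕ} (hwf : WellFounded (rel (slice D j))) :
    ∀ a, Acc (Wrel D) (Nat.pair j (a+1)) := by
  have : ∀ a, Acc (rel (slice D j)) a → Acc (Wrel D) (Nat.pair j (a+1)) := by
    intro a ha
    induction ha with
    | _ a _ ih =>
      constructor
      rintro y ⟨j', a', rfl, hwf', hy⟩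
      rcases hy with h0 | ⟨b, hb, hr⟩
      · obtain ⟨-, h2⟩ := Nat.pair_eq_pair.mp h0
        omega
      · obtain ⟨h1, h2⟩ := Nat.pair_eq_pair.mp hb
        have hb' : b = a := by omega
        subst h1; subst hb'
        exact ih a' hr
  exact fun a => this a (hwf.apply a)

theorem wrel_wf (D : Set ℕ) : WellFounded (Wrel D) := by
  constructor
  intro x
  constructor
  rintro y ⟨j, a, rfl, hwf, -⟩
  exact wrel_acc hwf a

/-- **Key lemma**: if `C` codes a β-model and `D` is a member of that model
which itself codes a β-model, then `mu D < mu C`. -/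
theorem mu_lt {C D : Set ℕ} (hCβ : IsBetaModel (codedFamily C))
    (hDβ : IsBetaModel (codedFamily D)) (hmem : D ∈ codedFamily C) :
    mu D < mu C := by
  set P : ℕ → Prop := fun n => ∃ x y, n = Nat.pair x y ∧ Wrel D x y with hP
  have hW : {n | P n} ∈ codedFamily C :=
    mem_of_arith_def hCβ hmem Psi Psi_arith P (fun e E hE => Psi_sat hDβ e E hE)
  have hrel : rel {n | P n} = Wrel D := by
    funext x y
    apply propext
    constructor
    · rintro ⟨x', y', hxy, hw⟩
      obtain ⟨h1, h2⟩ := Nat.pair_eq_pair.mp hxy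
      rw [h1, h2]; exact hw
    · intro hw; exact ⟨x, y, rfl, hw⟩
  have hWwf : WellFounded (rel {n | P n}) := by rw [hrel]; exact wrel_wf D
  have hhtW : ht {n | P n} = Ordinal.lsub (fun n => rk hWwf n) := by
    rw [ht]; exact dif_pos hWwf
  have key : ∀ i, ht (slice D i) < ht {n | P n} := by
    intro i
    rw [hhtW]
    by_cases hwf : WellFounded (rel (slice D i))
    · rw [ht, dif_pos hwf]
      have h1 : ∀ a, rk hwf a < rk hWwf (Nat.pair i 0) := by
        intro a
        have hhom : ∀ a b, rel (slice D i) a b →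
            rel {n | P n} (Nat.pair i (a+1)) (Nat.pair i (b+1)) := by
          intro a b hab
          rw [hrel]
          exact ⟨i, a, rfl, hwf, Or.inr ⟨b, rfl, hab⟩⟩
        have hle : rk hwf a ≤ rk hWwf (Nat.pair i (a+1)) :=
          rk_le_of_hom hwf hWwf (fun a => Nat.pair i (a+1)) hhom a
        have hlt : rk hWwf (Nat.pair i (a+1)) < rk hWwf (Nat.pair i 0) := by
          refine rk_lt hWwf ?_
          rw [hrel]
          exact ⟨i, a, rfl, hwf, Or.inl rfl⟩
        exact hle.trans_lt hlt
      calc Ordinal.lsub (fun a => rk hwf a) ≤ rk hWwf (Nat.pair i 0) := Ordinal.lsub_le h1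
        _ < Ordinal.lsub (fun n => rk hWwf n) := Ordinal.lt_lsub _ _
    · rw [ht, dif_neg hwf]
      exact lt_of_le_of_lt zero_le (Ordinal.lt_lsub (fun n => rk hWwf n) 0)
  obtain ⟨k, hk⟩ := hW
  have h3 : ht {n | P n} < mu C := by
    rw [← hk]
    exact Ordinal.lt_lsub _ k
  exact lt_of_le_of_lt (Ordinal.lsub_le key) h3

end Paper

namespace Paper

/-- **Theorem 4.1 (after Mummert–Simpson).**  If an L₂ theory `T` has a β-model
then it has a β-model containing no countable coded β-model of `T`. -/
theorem minimal_beta_model (T : Set Formula)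
    (h : ∃ M : Set (Set ℕ), IsBetaModel M ∧ SatisfiesTheory M T) :
    ∃ M : Set (Set ℕ), IsBetaModel M ∧ SatisfiesTheory M T ∧
      ¬ ∃ C ∈ M, IsCodedBetaModel C ∧ SatisfiesTheory (codedFamily C) T := by
  by_cases hS : ∃ C : Set ℕ, IsCodedBetaModel C ∧ SatisfiesTheory (codedFamily C) T
  · obtain ⟨C₀, hC₀⟩ := hS
    have hne : (Set.range fun p : {C : Set ℕ //
        IsCodedBetaModel C ∧ SatisfiesTheory (codedFamily C) T} => mu p.1).Nonempty :=
      ⟨mu C₀, ⟨C₀, hC₀⟩, rfl⟩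
    obtain ⟨o, ⟨⟨C, hC⟩, rfl⟩, hmin⟩ := Ordinal.lt_wf.has_min _ hne
    refine ⟨codedFamily C, hC.1, hC.2, ?_⟩
    rintro ⟨D, hDmem, hDβ, hDT⟩
    exact hmin (mu D) ⟨⟨D, hDβ, hDT⟩, rfl⟩ (mu_lt hC.1 hDβ hDmem)
  · obtain ⟨M, hMβ, hMT⟩ := h
    exact ⟨M, hMβ, hMT, fun ⟨C, _, hC1, hC2⟩ => hS ⟨C, hC1, hC2⟩⟩

end Paper
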